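/- In every MCR game, Max has a memoryless optimal strategy: there exists a memoryless strategy σ* for Max such that Val(v, σ*) = Val(v) for every vertex v. -/

import Mathlib

open Filter

/-- A two-player turn-based weighted game graph. `owner v = true` means that
vertex `v` belongs to player Max, `owner v = false` that it belongs to player Min.
Every vertex has at least one successor. -/
structure Game (V : Type) where
  owner : V → Bool
  E : V → V → Prop
  nonempty : ∀ v, ∃ v', E v v'
  w : V → V → ℤ

namespace Game

variable {V : Type}

/-- The (reversed) history of the first `k` vertices of `π` (most recent first). -/
def hist (π : ℕ → V) (k : ℕ) : List V := (List.ofFn fun i : Fin k => π i).reverse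

/-- A strategy: given the (reversed) list of previously visited vertices and the current
vertex, it picks a successor of the current vertex. -/
structure Strategy (g : Game V) where
  next : List V → V → V
  valid : ∀ h v, g.E v (next h v)

/-- A memoryless strategy only depends on the current vertex. -/
def Strategy.Memoryless {g : Game V} (s : g.Strategy) : Prop :=
  ∀ h h' v, s.next h v = s.next h' v

/-- A finite-memory strategy is one encoded by a deterministic Moore machine
`⟨M, m0, up, dec⟩`: the choice after a finite play is `dec` applied to the memory state
reached by reading the play (the initial vertex is not read) and to the last vertex. -/
def Strategy.FiniteMemory {g : Game V} (s : g.Strategy) : Prop :=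
  ∃ (M : Type) (_ : Fintype M) (m0 : M) (up : M → V → M) (dec : M → V → V),
    ∀ h v, s.next h v = dec (List.foldl up m0 (((h.reverse ++ [v]).drop 1))) v

variable (g : Game V)

/-- Next vertex chosen by the owner of the current vertex. -/
def step (σ τ : g.Strategy) (h : List V) (v : V) : V :=
  if g.owner v then σ.next h v else τ.next h v

/-- Current vertex and reversed history after `k` steps of the play `Play(v, σ, τ)`. -/
def playAux (σ τ : g.Strategy) (v : V) : ℕ → V × List V
  | 0 => (v, [])
  | k+1 =>
      let p := playAux σ τ v k
      (g.step σ τ p.2 p.1, p.1 :: p.2)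

/-- `Play(v, σ, τ)`: the unique play starting in `v` and conforming to the
strategy `σ` of Max and the strategy `τ` of Min. -/
def play (σ τ : g.Strategy) (v : V) (k : ℕ) : V := (g.playAux σ τ v k).1

/-- An infinite sequence of vertices is a play when consecutive vertices are linked
by edges. -/
def IsPlay (π : ℕ → V) : Prop := ∀ k, g.E (π k) (π (k+1))

/-- A play conforms to a strategy `s` of the player `p` if, whenever the current vertex
belongs to `p`, the next vertex is the one prescribed by `s`. -/
def Conforms (p : Bool) (s : g.Strategy) (π : ℕ → V) : Prop :=
  ∀ k, g.owner (π k) = p → π (k+1) = s.next (hist π k) (π k)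

/-- Total-payoff of the prefix of length `k`: the sum of the first `k` edge weights. -/
def TPfin (π : ℕ → V) (k : ℕ) : ℤ := ∑ i ∈ Finset.range k, g.w (π i) (π (i+1))

/-- Total payoff of an infinite play: `liminf` of the payoffs of its prefixes. -/
noncomputable def TP (π : ℕ → V) : EReal :=
  liminf (fun k => (((g.TPfin π k : ℤ) : ℝ) : EReal)) atTop

/-- Mean payoff of an infinite play. -/
noncomputable def MP (π : ℕ → V) : EReal :=
  liminf (fun k => ((((g.TPfin π k : ℤ) : ℝ) / (k : ℝ)) : EReal)) atTop

open Classical in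
/-- Min-cost reachability payoff with target `t`: total payoff up to the first visit
of `t`, and `+∞` if `t` is never visited. -/
noncomputable def MCR (t : V) (π : ℕ → V) : EReal :=
  if h : ∃ k, π k = t then (((g.TPfin π (Nat.find h) : ℤ) : ℝ) : EReal) else ⊤

open Classical in
/-- `MCR` payoff restricted to reaching the target among the first `i+1` vertices. -/
noncomputable def MCRbd (t : V) (i : ℕ) (π : ℕ → V) : EReal :=
  if ∃ k ≤ i, π k = t then g.MCR t π else ⊤

/-- Value of a strategy `σ` of Max from `v` : `inf_τ P(Play(v, σ, τ))`. -/
noncomputable def valMax (P : (ℕ → V) → EReal) (v : V) (σ : g.Strategy) : EReal :=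
  ⨅ τ : g.Strategy, P (g.play σ τ v)

/-- Value of a strategy `τ` of Min from `v` : `sup_σ P(Play(v, σ, τ))`. -/
noncomputable def valMin (P : (ℕ → V) → EReal) (v : V) (τ : g.Strategy) : EReal :=
  ⨆ σ : g.Strategy, P (g.play σ τ v)

/-- Lower value `Val⁻(v) = sup_σ inf_τ P(Play(v, σ, τ))`. -/
noncomputable def lowerVal (P : (ℕ → V) → EReal) (v : V) : EReal :=
  ⨆ σ : g.Strategy, g.valMax P v σ

/-- Upper value `Val⁺(v) = inf_τ sup_σ P(Play(v, σ, τ))`. -/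
noncomputable def upperVal (P : (ℕ → V) → EReal) (v : V) : EReal :=
  ⨅ τ : g.Strategy, g.valMin P v τ

end Game

/-- A min-cost reachability game: a game together with a target vertex `t` whose only
outgoing edge is a self-loop of weight `0`. -/
structure MCRGame (V : Type) extends Game V where
  t : V
  loop : E t t
  loopOnly : ∀ v, E t v → v = t
  loopZero : w t t = 0

/-- The value of a (determined) MCR game. -/
noncomputable def MCRGame.Val {V : Type} (G : MCRGame V) : V → EReal :=
  fun v => G.toGame.lowerVal (G.toGame.MCR G.t) v

/-- The `i`-step value `val_i(v) = inf_τ sup_σ MCR_i(Play(v, σ, τ))`. -/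
noncomputable def MCRGame.ival {V : Type} (G : MCRGame V) (i : ℕ) : V → EReal :=
  fun v => G.toGame.upperVal (G.toGame.MCRbd G.t i) v


section Aux

namespace MCRAux

variable {V : Type}

noncomputable def dstrat (g : Game V) : g.Strategy :=
  ⟨fun _ v => Classical.choose (g.nonempty v), fun _ v => Classical.choose_spec (g.nonempty v)⟩

instance (g : Game V) : Nonempty g.Strategy := ⟨dstrat g⟩

lemma step_valid (g : Game V) (σ τ : g.Strategy) (h : List V) (v : V) :
    g.E v (g.step σ τ h v) := by
  unfold Game.step; split
  · exact σ.valid _ _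
  · exact τ.valid _ _

/-- Shift a strategy of Max by prefixing the history with `v`. -/
def shiftS (g : Game V) (σ : g.Strategy) (v : V) : g.Strategy :=
  ⟨fun h u => σ.next (h ++ [v]) u, fun h u => σ.valid _ _⟩

open Classical in
/-- Extend a strategy of Min on the shifted game to the original game: play `v'` first. -/
noncomputable def extendT (g : Game V) (τ' : g.Strategy) (v v' : V) (hE : g.E v v') :
    g.Strategy :=
  ⟨fun h u => if h = [] then (if u = v then v' else (dstrat g).next h u)
              else τ'.next h.dropLast u, by
    intro h u
    split
    · split
      · next hu => subst hu; exact hE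
      · exact (dstrat g).valid _ _
    · exact τ'.valid _ _⟩

lemma playAux_shift (g : Game V) (σ τ' : g.Strategy) (v v' : V) (hE : g.E v v')
    (hσ : g.owner v = true → σ.next [] v = v') :
    ∀ k, g.playAux σ (extendT g τ' v v' hE) v (k+1) =
      ((g.playAux (shiftS g σ v) τ' v' k).1, (g.playAux (shiftS g σ v) τ' v' k).2 ++ [v]) := by
  intro k
  induction k with
  | zero =>
      show (g.step σ (extendT g τ' v v' hE) [] v, [v]) = (v', [v])
      have hstep : g.step σ (extendT g τ' v v' hE) [] v = v' := by
        unfold Game.step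
        cases howner : g.owner v with
        | true => simpa using hσ howner
        | false => simp [extendT]
      rw [hstep]
  | succ k ih =>
      show (g.step σ (extendT g τ' v v' hE) (g.playAux σ (extendT g τ' v v' hE) v (k+1)).2
              (g.playAux σ (extendT g τ' v v' hE) v (k+1)).1,
            (g.playAux σ (extendT g τ' v v' hE) v (k+1)).1 ::
              (g.playAux σ (extendT g τ' v v' hE) v (k+1)).2) = _
      rw [ih]
      dsimp only
      set P := (g.playAux (shiftS g σ v) τ' v' k).1
      set H := (g.playAux (shiftS g σ v) τ' v' k).2
      have hstep : g.step σ (extendT g τ' v v' hE) (H ++ [v]) P =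
          g.step (shiftS g σ v) τ' H P := by
        cases howner : g.owner P with
        | true => simp [Game.step, howner, shiftS]
        | false => simp [Game.step, howner, extendT, List.dropLast_concat]
      show (g.step σ (extendT g τ' v v' hE) (H ++ [v]) P, P :: (H ++ [v])) =
        ((g.step (shiftS g σ v) τ' H P, P :: H).1, (g.step (shiftS g σ v) τ' H P, P :: H).2 ++ [v])
      rw [hstep]
      rfl

lemma play_shift (g : Game V) (σ τ' : g.Strategy) (v v' : V) (hE : g.E v v')
    (hσ : g.owner v = true → σ.next [] v = v') (k : ℕ) :
    g.play σ (extendT g τ' v v' hE) v (k+1) = g.play (shiftS g σ v) τ' v' k := by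
  unfold Game.play
  rw [playAux_shift g σ τ' v v' hE hσ k]

lemma TPfin_shift (g : Game V) (σ τ' : g.Strategy) (v v' : V) (hE : g.E v v')
    (hσ : g.owner v = true → σ.next [] v = v') (k : ℕ) :
    g.TPfin (g.play σ (extendT g τ' v v' hE) v) (k+1) =
      g.w v v' + g.TPfin (g.play (shiftS g σ v) τ' v') k := by
  have h1 : ∀ i, g.play σ (extendT g τ' v v' hE) v (i+1) = g.play (shiftS g σ v) τ' v' i :=
    play_shift g σ τ' v v' hE hσ
  unfold Game.TPfin
  rw [Finset.sum_range_succ', add_comm]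
  congr 1
  · show g.w (g.play σ (extendT g τ' v v' hE) v 0) (g.play σ (extendT g τ' v v' hE) v 1) = g.w v v'
    rw [h1 0]
    rfl
  · apply Finset.sum_congr rfl
    intro i _
    rw [h1 i, h1 (i+1)]

lemma MCR_shift (g : Game V) (t : V) (σ τ' : g.Strategy) (v v' : V) (hv : v ≠ t)
    (hE : g.E v v') (hσ : g.owner v = true → σ.next [] v = v') :
    g.MCR t (g.play σ (extendT g τ' v v' hE) v) =
      ((g.w v v' : ℝ) : EReal) + g.MCR t (g.play (shiftS g σ v) τ' v') := by
  classical
  have h1 : ∀ i, g.play σ (extendT g τ' v v' hE) v (i+1) = g.play (shiftS g σ v) τ' v' i :=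
    play_shift g σ τ' v v' hE hσ
  have h0 : g.play σ (extendT g τ' v v' hE) v 0 = v := rfl
  unfold Game.MCR
  by_cases h : ∃ k, g.play (shiftS g σ v) τ' v' k = t
  · have h2 : ∃ k, g.play σ (extendT g τ' v v' hE) v k = t :=
      ⟨Nat.find h + 1, by rw [h1]; exact Nat.find_spec h⟩
    rw [dif_pos h2, dif_pos h]
    have hfind : Nat.find h2 = Nat.find h + 1 := by
      rw [Nat.find_eq_iff]
      refine ⟨by rw [h1]; exact Nat.find_spec h, ?_⟩
      intro m hm
      match m with
      | 0 => rw [h0]; exact hv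
      | j+1 =>
          rw [h1]
          exact Nat.find_min h (by omega)
    rw [hfind, TPfin_shift g σ τ' v v' hE hσ]
    push_cast
    rfl
  · have h2 : ¬ ∃ k, g.play σ (extendT g τ' v v' hE) v k = t := by
      rintro ⟨k, hk⟩
      match k with
      | 0 => rw [h0] at hk; exact hv hk
      | j+1 => rw [h1] at hk; exact h ⟨j, hk⟩
    rw [dif_neg h2, dif_neg h]
    exact (EReal.add_top_of_ne_bot (EReal.coe_ne_bot _)).symm

lemma ereal_real_add_cancel (c : ℝ) (x : EReal) : ((-c : ℝ) : EReal) + ((c : EReal) + x) = x := by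
  induction x using EReal.rec with
  | bot => simp
  | coe r => norm_cast; ring
  | top => simp

lemma ereal_coe_add_coe_add (a b : ℝ) (x : EReal) :
    (a : EReal) + ((b : EReal) + x) = ((a + b : ℝ) : EReal) + x := by
  induction x using EReal.rec with
  | bot => simp
  | coe r => norm_cast; ring
  | top => simp

lemma ereal_add_iInf {ι : Type} [Nonempty ι] (c : ℝ) (f : ι → EReal) :
    (c : EReal) + ⨅ i, f i = ⨅ i, ((c : EReal) + f i) := by
  apply le_antisymm
  · exact le_iInf fun i => add_le_add_right (iInf_le f i) _
  · have h1 : ((-c : ℝ) : EReal) + ⨅ i, ((c : EReal) + f i) ≤ ⨅ i, f i := by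
      refine le_iInf fun i => ?_
      have := add_le_add_right (iInf_le (fun j => (c : EReal) + f j) i) (((-c : ℝ)) : EReal)
      rwa [ereal_real_add_cancel] at this
    have h2 := add_le_add_right h1 ((c : ℝ) : EReal)
    have h3 : ((c : ℝ) : EReal) + (((-c : ℝ) : EReal) + ⨅ i, ((c : EReal) + f i)) =
        ⨅ i, ((c : EReal) + f i) := by
      have := ereal_real_add_cancel (-c) (⨅ i, ((c : EReal) + f i))
      simpa using this
    rwa [h3] at h2

lemma valMax_le_shift (G : MCRGame V) (σ : G.toGame.Strategy) (v v' : V) (hv : v ≠ G.t)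
    (hE : G.toGame.E v v') (hσ : G.toGame.owner v = true → σ.next [] v = v') :
    G.toGame.valMax (G.toGame.MCR G.t) v σ ≤ ((G.toGame.w v v' : ℝ) : EReal) + G.Val v' := by
  have key : ∀ τ' : G.toGame.Strategy,
      G.toGame.valMax (G.toGame.MCR G.t) v σ ≤
        ((G.toGame.w v v' : ℝ) : EReal) +
          G.toGame.MCR G.t (G.toGame.play (shiftS G.toGame σ v) τ' v') := by
    intro τ'
    calc G.toGame.valMax (G.toGame.MCR G.t) v σ
        ≤ G.toGame.MCR G.t (G.toGame.play σ (extendT G.toGame τ' v v' hE) v) :=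
          iInf_le _ _
      _ = _ := MCR_shift G.toGame G.t σ τ' v v' hv hE hσ
  have h1 : G.toGame.valMax (G.toGame.MCR G.t) v σ ≤
      ((G.toGame.w v v' : ℝ) : EReal) + G.toGame.valMax (G.toGame.MCR G.t) v' (shiftS G.toGame σ v) := by
    simp only [Game.valMax]
    rw [ereal_add_iInf]
    exact le_iInf key
  refine h1.trans (add_le_add_right ?_ _)
  exact le_iSup (fun σ' => G.toGame.valMax (G.toGame.MCR G.t) v' σ') (shiftS G.toGame σ v)

lemma play_t (G : MCRGame V) (σ τ : G.toGame.Strategy) (k : ℕ) :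
    G.toGame.play σ τ G.t k = G.t := by
  induction k with
  | zero => rfl
  | succ k ih =>
      have hs : G.toGame.play σ τ G.t (k+1) =
          G.toGame.step σ τ (G.toGame.playAux σ τ G.t k).2 (G.toGame.play σ τ G.t k) := rfl
      rw [hs, ih]
      exact G.loopOnly _ (step_valid _ _ _ _ _)

lemma MCR_play_t (G : MCRGame V) (σ τ : G.toGame.Strategy) :
    G.toGame.MCR G.t (G.toGame.play σ τ G.t) = 0 := by
  classical
  unfold Game.MCR
  have h : ∃ k, G.toGame.play σ τ G.t k = G.t := ⟨0, rfl⟩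
  rw [dif_pos h]
  have h0 : Nat.find h = 0 := Nat.find_eq_zero h |>.mpr rfl
  rw [h0]
  simp [Game.TPfin]

lemma Val_t (G : MCRGame V) : G.Val G.t = 0 := by
  show (⨆ σ : G.toGame.Strategy, ⨅ τ : G.toGame.Strategy,
      G.toGame.MCR G.t (G.toGame.play σ τ G.t)) = 0
  simp only [MCR_play_t, iInf_const, iSup_const]

lemma exists_best (G : MCRGame V) [Fintype V] (v : V) :
    ∃ u, G.toGame.E v u ∧ ∀ u', G.toGame.E v u' →
      ((G.toGame.w v u' : ℝ) : EReal) + G.Val u' ≤ ((G.toGame.w v u : ℝ) : EReal) + G.Val u := by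
  classical
  obtain ⟨u0, hu0⟩ := G.toGame.nonempty v
  obtain ⟨u, hu, hmax⟩ := Finset.exists_max_image
    (Finset.univ.filter fun u => G.toGame.E v u)
    (fun u => ((G.toGame.w v u : ℝ) : EReal) + G.Val u) ⟨u0, by simp [hu0]⟩
  exact ⟨u, by simpa using hu, fun u' h' => hmax u' (by simp [h'])⟩

noncomputable def bestSucc (G : MCRGame V) [Fintype V] (v : V) : V :=
  (exists_best G v).choose

lemma bestSucc_edge (G : MCRGame V) [Fintype V] (v : V) : G.toGame.E v (bestSucc G v) :=
  (exists_best G v).choose_spec.1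

lemma bestSucc_max (G : MCRGame V) [Fintype V] (v u' : V) (h' : G.toGame.E v u') :
    ((G.toGame.w v u' : ℝ) : EReal) + G.Val u' ≤
      ((G.toGame.w v (bestSucc G v) : ℝ) : EReal) + G.Val (bestSucc G v) :=
  (exists_best G v).choose_spec.2 u' h'

lemma val_le_max (G : MCRGame V) [Fintype V] (v : V) (hv : G.toGame.owner v = true) :
    G.Val v ≤ ((G.toGame.w v (bestSucc G v) : ℝ) : EReal) + G.Val (bestSucc G v) := by
  by_cases ht : v = G.t
  · subst ht
    have hb : bestSucc G G.t = G.t := G.loopOnly _ (bestSucc_edge G G.t)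
    rw [hb, Val_t, G.loopZero]
    simp
  · show (⨆ σ : G.toGame.Strategy, G.toGame.valMax (G.toGame.MCR G.t) v σ) ≤ _
    refine iSup_le fun σ => ?_
    have h1 := valMax_le_shift G σ v (σ.next [] v) ht (σ.valid [] v) (fun _ => rfl)
    exact h1.trans (bestSucc_max G v _ (σ.valid [] v))

lemma val_le_min (G : MCRGame V) (v v' : V) (hv : G.toGame.owner v = false)
    (hE : G.toGame.E v v') :
    G.Val v ≤ ((G.toGame.w v v' : ℝ) : EReal) + G.Val v' := by
  by_cases ht : v = G.t
  · subst ht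
    have hb : v' = G.t := G.loopOnly _ hE
    subst hb
    rw [Val_t, G.loopZero]
    simp
  · show (⨆ σ : G.toGame.Strategy, G.toGame.valMax (G.toGame.MCR G.t) v σ) ≤ _
    refine iSup_le fun σ => ?_
    exact valMax_le_shift G σ v v' ht hE (fun h => by rw [hv] at h; exact absurd h (by simp))

noncomputable def optStrat (G : MCRGame V) [Fintype V] : G.toGame.Strategy :=
  ⟨fun _ v => if G.toGame.owner v then bestSucc G v else (dstrat G.toGame).next [] v, by
    intro h v
    split
    · exact bestSucc_edge G v
    · exact (dstrat G.toGame).valid _ _⟩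

end MCRAux

end Aux

/-- in every MCR game, Max has a memoryless optimal strategy. -/
theorem statement_12 {V : Type} [Fintype V] (G : MCRGame V) :
    ∃ σ : G.toGame.Strategy, σ.Memoryless ∧
      ∀ v : V, G.toGame.valMax (G.toGame.MCR G.t) v σ = G.Val v := by
  classical
  open MCRAux in
  refine ⟨optStrat G, fun h h' v => rfl, fun v => ?_⟩
  apply le_antisymm
  · exact le_iSup (fun σ => G.toGame.valMax (G.toGame.MCR G.t) v σ) (optStrat G)
  · refine le_iInf fun τ => ?_
    set π := G.toGame.play (optStrat G) τ v with hπ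
    have key : ∀ k, G.Val v ≤ ((G.toGame.TPfin π k : ℝ) : EReal) + G.Val (π k) := by
      intro k
      induction k with
      | zero =>
          have h0 : π 0 = v := rfl
          rw [h0]
          simp [Game.TPfin]
      | succ k ih =>
          have hstep : π (k+1) =
              G.toGame.step (optStrat G) τ (G.toGame.playAux (optStrat G) τ v k).2 (π k) := rfl
          have hE : G.toGame.E (π k) (π (k+1)) := by
            rw [hstep]; exact step_valid _ _ _ _ _
          have h2 : G.Val (π k) ≤
              ((G.toGame.w (π k) (π (k+1)) : ℝ) : EReal) + G.Val (π (k+1)) := by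
            cases howner : G.toGame.owner (π k) with
            | true =>
                have hb : π (k+1) = bestSucc G (π k) := by
                  rw [hstep]
                  unfold Game.step optStrat
                  simp [howner]
                rw [hb]
                exact val_le_max G _ howner
            | false => exact val_le_min G _ _ howner hE
          have hsum : G.toGame.TPfin π (k+1) =
              G.toGame.TPfin π k + G.toGame.w (π k) (π (k+1)) := by
            unfold Game.TPfin
            rw [Finset.sum_range_succ]
          calc G.Val v ≤ ((G.toGame.TPfin π k : ℝ) : EReal) + G.Val (π k) := ih
            _ ≤ ((G.toGame.TPfin π k : ℝ) : EReal) +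
                (((G.toGame.w (π k) (π (k+1)) : ℝ) : EReal) + G.Val (π (k+1))) :=
              add_le_add_right h2 _
            _ = (((G.toGame.TPfin π k : ℝ) + (G.toGame.w (π k) (π (k+1)) : ℝ) : ℝ) : EReal) +
                G.Val (π (k+1)) := ereal_coe_add_coe_add _ _ _
            _ = ((G.toGame.TPfin π (k+1) : ℝ) : EReal) + G.Val (π (k+1)) := by
              rw [hsum]; push_cast; ring_nf
    by_cases h : ∃ k, π k = G.t
    · have hk := key (Nat.find h)
      rw [Nat.find_spec h, Val_t] at hk
      unfold Game.MCR
      rw [dif_pos h]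
      simpa using hk
    · unfold Game.MCR
      rw [dif_neg h]
      exact le_top
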